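/- For every δ ∈ (0, 1/6) there exist a finite metric space (S, d_S), a two-element action set A = {α, β}, and transition probability mass functions P(·|s,a) on S for each (s,a) ∈ S × A satisfying the total-variation Lipschitz condition ‖P(·|s,a) − P(·|s',a')‖_TV ≤ d_S(s,s') + 1{a ≠ a'} for all s, s' ∈ S and a, a' ∈ A, together with states s¹, s², s₊ ∈ S such that d_S(s¹, s²) = δ, P(s₊|sⁱ,a) > 0 for i ∈ {1,2} and a ∈ A, and | P(s₊|s¹,α)/(P(s₊|s¹,α) + P(s₊|s¹,β)) − P(s₊|s²,α)/(P(s₊|s²,α) + P(s₊|s²,β)) | = 1/6 > δ. In particular, the one-step inverse-kinematics regression function (s) ↦ P(s₊|s,α)/Σ_{a∈A} P(s₊|s,a) is not 1-Lipschitz with respect to d_S even though the dynamics are TV-Lipschitz. -/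

import Mathlib

open scoped BigOperators

/-- The optimal population-level regression function for one-step inverse
kinematics need not be Lipschitz in the latent state, even under
TV-Lipschitz latent dynamics.  Actions are `Bool`, with `true = α` and
`false = β`. -/
theorem inverse_kinematics_not_lipschitz (δ : ℝ) (hδpos : 0 < δ) (hδlt : δ < 1 / 6) :
    ∃ (n : ℕ) (d : Fin n → Fin n → ℝ) (P : Fin n → Bool → Fin n → ℝ)
      (s1 s2 sp : Fin n),
      -- (S, d) is a metric space
      (∀ x, d x x = 0) ∧
      (∀ x y, 0 ≤ d x y) ∧
      (∀ x y, d x y = 0 → x = y) ∧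
      (∀ x y, d x y = d y x) ∧
      (∀ x y z, d x z ≤ d x y + d y z) ∧
      -- P(·|s,a) is a probability mass function
      (∀ s a u, 0 ≤ P s a u) ∧
      (∀ s a, ∑ u, P s a u = 1) ∧
      -- TV-Lipschitz dynamics
      (∀ s s' : Fin n, ∀ a a' : Bool,
        (1 / 2) * ∑ u, |P s a u - P s' a' u|
          ≤ d s s' + (if a = a' then (0 : ℝ) else 1)) ∧
      d s1 s2 = δ ∧
      (∀ a, 0 < P s1 a sp) ∧
      (∀ a, 0 < P s2 a sp) ∧
      |P s1 true sp / (P s1 true sp + P s1 false sp)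
        - P s2 true sp / (P s2 true sp + P s2 false sp)| = 1 / 6 ∧
      δ < 1 / 6 := by
  refine ⟨3, (fun x y => if x = y then 0 else δ),
    (fun s a u => if s = 0 ∧ a = true then
        (if u = 0 then 1 - 2*δ else if u = 2 then 2*δ else 0)
      else (if u = 0 then 1 - δ else if u = 2 then δ else 0)),
    0, 1, 2, ?_, ?_, ?_, ?_, ?_, ?_, ?_, ?_, ?_, ?_, ?_, ?_, hδlt⟩
  · intro x; simp
  · intro x y; dsimp only; split <;> [exact le_refl 0; exact hδpos.le]
  · intro x y h; by_contra hne; simp [hne] at h; linarith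
  · intro x y; by_cases h : x = y <;> simp [h, eq_comm]
  · intro x y z
    by_cases hxz : x = z <;> by_cases hxy : x = y <;> by_cases hyz : y = z <;>
      simp_all <;> linarith
  · intro s a u
    dsimp only
    split <;> split <;> try split
    all_goals linarith
  · intro s a
    dsimp only
    rw [Fin.sum_univ_three]
    norm_num
    split <;> norm_num [show (1:Fin 3) ≠ 2 from by decide, show (2:Fin 3) ≠ 0 from by decide]
  · intro s s' a a'
    have h1 : |δ - 2*δ| = δ := by
      rw [show δ - 2*δ = -δ by ring, abs_neg, abs_of_nonneg hδpos.le]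
    have h2 : |2*δ - δ| = δ := by
      rw [show 2*δ - δ = δ by ring, abs_of_nonneg hδpos.le]
    fin_cases s <;> fin_cases s' <;> cases a <;> cases a' <;>
      norm_num [Fin.sum_univ_three, show (1:Fin 3) ≠ 2 from by decide, show (2:Fin 3) ≠ 0 from by decide, h1, h2] <;> linarith
  · simp
  · intro a; cases a <;> simp <;> linarith
  · intro a; cases a <;> simp <;> linarith
  · norm_num [show (2:Fin 3) ≠ 0 by decide]
    rw [show 2*δ/(2*δ+δ) - δ/(δ+δ) = 1/6 by field_simp; ring]
    norm_num
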